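/- Let R be a symmetric positive-definite correlation matrix and define for j > i the quantity D_{ij} = det(R_i^{*j})/det(R_{i−1}) − det(R_{i+1}^{*j})/det(R_i) (with det(R_1^{*j}) = 1, det(R_0) = 1, and R_j^{*j} = R_j). Then the squared semi-partial correlation satisfies ρ_{ij(1,...,i−1)}² = D_{ij}, i.e., (R_{ij} − ρ_i^{*j} R_{i−1}^{−1} ρ_i^T)²/(1 − ρ_i R_{i−1}^{−1} ρ_i^T) = det(R_i^{*j})/det(R_{i−1}) − det(R_{i+1}^{*j})/det(R_i). -/

import Mathlib

open Matrix

/-- Leading `i × i` principal submatrix. -/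
def lead {n : ℕ} (R : Matrix (Fin n) (Fin n) ℝ) (i : ℕ) (h : i ≤ n) :
    Matrix (Fin i) (Fin i) ℝ :=
  R.submatrix (Fin.castLE h) (Fin.castLE h)

/-- First `i` entries of column `j` of `R`. -/
def colv {n : ℕ} (R : Matrix (Fin n) (Fin n) ℝ) (i : ℕ) (h : i ≤ n) (j : Fin n) :
    Fin i → ℝ :=
  fun k => R (Fin.castLE h k) j


/-- The bordered matrix `R_{i+1}^{*j}` (0-indexed size parameter `i`):
`[[R_i, (ρ_{i+1}^{*j})ᵀ], [ρ_{i+1}^{*j}, 1]]`, i.e. the leading `i × i`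
submatrix bordered by the first `i` entries of column `j` with corner `1`. -/
def brd {n : ℕ} (R : Matrix (Fin n) (Fin n) ℝ) (i : ℕ) (h : i ≤ n) (j : Fin n) :
    Matrix (Fin (i + 1)) (Fin (i + 1)) ℝ :=
  Matrix.of fun k l =>
    if hk : (k : ℕ) < i then
      if hl : (l : ℕ) < i then R ⟨k, lt_of_lt_of_le hk h⟩ ⟨l, lt_of_lt_of_le hl h⟩
      else R ⟨k, lt_of_lt_of_le hk h⟩ j
    else if hl : (l : ℕ) < i then R ⟨l, lt_of_lt_of_le hl h⟩ j
    else 1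

section AuxLemmas

lemma sum_castLE' {i n : ℕ} (h : i ≤ n) (g : Fin n → ℝ)
    (hg : ∀ k : Fin n, ¬(k : ℕ) < i → g k = 0) :
    ∑ k, g k = ∑ k : Fin i, g (Fin.castLE h k) := by
  classical
  have hmap := Finset.sum_map Finset.univ ⟨Fin.castLE h, Fin.castLE_injective h⟩ g
  simp only [Function.Embedding.coeFn_mk] at hmap
  rw [← hmap]
  symm
  apply Finset.sum_subset (Finset.subset_univ _)
  intro k _ hk
  apply hg
  intro hki
  apply hk
  simp only [Finset.mem_map, Finset.mem_univ, Function.Embedding.coeFn_mk, true_and]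
  exact ⟨⟨k, hki⟩, Fin.ext rfl⟩

lemma lead_posDef {n : ℕ} {R : Matrix (Fin n) (Fin n) ℝ} (hR : R.PosDef) (i : ℕ)
    (h : i ≤ n) : (lead R i h).PosDef := by
  have hsym : ∀ a b, R a b = R b a := fun a b => by
    conv_lhs => rw [← hR.1]
    simp [conjTranspose_apply]
  refine Matrix.PosDef.of_dotProduct_mulVec_pos ?_ ?_
  · ext k l
    simp only [lead, conjTranspose_apply, submatrix_apply, star_trivial]
    exact hsym _ _
  · intro x hx
    classical
    set y : Fin n → ℝ := fun k => if hk : (k : ℕ) < i then x ⟨k, hk⟩ else 0 with hydef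
    have hyx : ∀ k : Fin i, y (Fin.castLE h k) = x k := by
      intro k
      simp only [hydef, Fin.coe_castLE]
      rw [dif_pos k.isLt]
    have hy0 : ∀ k : Fin n, ¬(k : ℕ) < i → y k = 0 := by
      intro k hk; simp only [hydef]; rw [dif_neg hk]
    have hyne : y ≠ 0 := by
      intro h0
      apply hx
      funext k
      have := congrFun h0 (Fin.castLE h k)
      rwa [hyx k] at this
    have hpos := hR.dotProduct_mulVec_pos hyne
    have e1 : star y ⬝ᵥ R *ᵥ y = star x ⬝ᵥ (lead R i h) *ᵥ x := by
      simp only [star_trivial, dotProduct, mulVec]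
      rw [sum_castLE' h (fun k => y k * ∑ l, R k l * y l)
        (fun k hk => by simp [hy0 k hk])]
      apply Finset.sum_congr rfl
      intro k _
      rw [hyx k]
      congr 1
      rw [sum_castLE' h (fun l => R (Fin.castLE h k) l * y l)
        (fun l hl => by simp [hy0 l hl])]
      apply Finset.sum_congr rfl
      intro l _
      rw [hyx l]
      rfl
    rw [← e1]
    exact hpos

lemma fsfe_lt {i : ℕ} (k : Fin (i + 1)) (hk : (k : ℕ) < i) :
    finSumFinEquiv.symm k = Sum.inl (⟨k, hk⟩ : Fin i) := by
  rw [Equiv.symm_apply_eq]; exact Fin.ext (by simp)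

lemma fsfe_ge {i : ℕ} (k : Fin (i + 1)) (hk : ¬(k : ℕ) < i) :
    finSumFinEquiv.symm k = Sum.inr (0 : Fin 1) := by
  have hki : (k : ℕ) = i := le_antisymm (Nat.lt_succ_iff.mp k.isLt) (le_of_not_gt hk)
  rw [Equiv.symm_apply_eq]; exact Fin.ext (by simp [hki])

lemma det_brd {n : ℕ} (R : Matrix (Fin n) (Fin n) ℝ) (i : ℕ) (h : i ≤ n)
    (hInv : Invertible (lead R i h)) (j : Fin n) :
    (brd R i h j).det =
      (lead R i h).det * (1 - colv R i h j ⬝ᵥ (lead R i h)⁻¹ *ᵥ colv R i h j) := by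
  set A := lead R i h with hA
  set u := colv R i h j with hu
  have hb : brd R i h j =
      (fromBlocks A (Matrix.of fun k (_ : Fin 1) => u k)
        (Matrix.of fun (_ : Fin 1) l => u l)
        (Matrix.of fun (_ _ : Fin 1) => (1 : ℝ))).submatrix
        finSumFinEquiv.symm finSumFinEquiv.symm := by
    ext k l
    rcases lt_or_ge (k : ℕ) i with hk | hk <;> rcases lt_or_ge (l : ℕ) i with hl | hl
    · rw [submatrix_apply, fsfe_lt k hk, fsfe_lt l hl]
      simp [brd, hk, hl, hA, lead]
    · rw [submatrix_apply, fsfe_lt k hk, fsfe_ge l (not_lt.mpr hl)]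
      simp [brd, hk, not_lt.mpr hl, hu, colv]
    · rw [submatrix_apply, fsfe_ge k (not_lt.mpr hk), fsfe_lt l hl]
      simp [brd, not_lt.mpr hk, hl, hu, colv]
    · rw [submatrix_apply, fsfe_ge k (not_lt.mpr hk), fsfe_ge l (not_lt.mpr hl)]
      simp [brd, not_lt.mpr hk, not_lt.mpr hl]
  rw [hb, det_submatrix_equiv_self, det_fromBlocks₁₁, invOf_eq_nonsing_inv]
  congr 1
  rw [det_fin_one]
  simp only [Matrix.sub_apply, of_apply, mul_apply, dotProduct, mulVec, Finset.univ_unique,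
    Fin.default_eq_zero, Finset.sum_singleton]
  congr 1
  simp only [Finset.sum_mul, Finset.mul_sum]
  rw [Finset.sum_comm]
  apply Finset.sum_congr rfl
  intro k _
  apply Finset.sum_congr rfl
  intro l _
  ring

lemma fsfe2_lt {i : ℕ} (k : Fin (i + 2)) (hk : (k : ℕ) < i) :
    (finSumFinEquiv (m := i) (n := 2)).symm k = Sum.inl (⟨k, hk⟩ : Fin i) := by
  rw [Equiv.symm_apply_eq]; exact Fin.ext (by simp)

lemma fsfe2_eq {i : ℕ} (k : Fin (i + 2)) (hk : (k : ℕ) = i) :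
    (finSumFinEquiv (m := i) (n := 2)).symm k = Sum.inr (0 : Fin 2) := by
  rw [Equiv.symm_apply_eq]; exact Fin.ext (by simp [hk])

lemma fsfe2_eq1 {i : ℕ} (k : Fin (i + 2)) (hk : (k : ℕ) = i + 1) :
    (finSumFinEquiv (m := i) (n := 2)).symm k = Sum.inr (1 : Fin 2) := by
  rw [Equiv.symm_apply_eq]; exact Fin.ext (by simp [hk])

lemma lead_succ {n : ℕ} (R : Matrix (Fin n) (Fin n) ℝ) (hR : R.PosDef)
    (hdiag : ∀ k, R k k = 1) (i : ℕ) (h : i + 1 ≤ n) :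
    lead R (i + 1) h = brd R i (Nat.le_of_succ_le h) ⟨i, h⟩ := by
  have hsym : ∀ a b, R a b = R b a := fun a b => by
    conv_lhs => rw [← hR.1]
    simp [conjTranspose_apply]
  ext k l
  rcases lt_or_ge (k : ℕ) i with hk | hk <;> rcases lt_or_ge (l : ℕ) i with hl | hl
  · simp only [lead, submatrix_apply, brd, of_apply, dif_pos hk, dif_pos hl]
    rfl
  · have hl' : (l : ℕ) = i := le_antisymm (Nat.lt_succ_iff.mp l.isLt) hl
    simp only [lead, submatrix_apply, brd, of_apply, dif_pos hk, dif_neg (not_lt.mpr hl)]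
    have : Fin.castLE h l = (⟨i, h⟩ : Fin n) := Fin.ext hl'
    rw [this]
    rfl
  · have hk' : (k : ℕ) = i := le_antisymm (Nat.lt_succ_iff.mp k.isLt) hk
    simp only [lead, submatrix_apply, brd, of_apply, dif_neg (not_lt.mpr hk), dif_pos hl]
    have : Fin.castLE h k = (⟨i, h⟩ : Fin n) := Fin.ext hk'
    rw [this]
    exact hsym _ _
  · have hk' : (k : ℕ) = i := le_antisymm (Nat.lt_succ_iff.mp k.isLt) hk
    have hl' : (l : ℕ) = i := le_antisymm (Nat.lt_succ_iff.mp l.isLt) hl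
    simp only [lead, submatrix_apply, brd, of_apply, dif_neg (not_lt.mpr hk),
      dif_neg (not_lt.mpr hl)]
    have e1 : Fin.castLE h k = (⟨i, h⟩ : Fin n) := Fin.ext hk'
    have e2 : Fin.castLE h l = (⟨i, h⟩ : Fin n) := Fin.ext hl'
    rw [e1, e2, hdiag]

lemma det_brd2 {n : ℕ} (R : Matrix (Fin n) (Fin n) ℝ) (hR : R.PosDef)
    (hdiag : ∀ k, R k k = 1) (i : ℕ) (h : i + 1 ≤ n)
    (hInv : Invertible (lead R i (Nat.le_of_succ_le h))) (j : Fin n) :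
    (brd R (i + 1) h j).det =
      (lead R i (Nat.le_of_succ_le h)).det *
        ((1 - colv R i (Nat.le_of_succ_le h) ⟨i, h⟩ ⬝ᵥ (lead R i (Nat.le_of_succ_le h))⁻¹ *ᵥ
            colv R i (Nat.le_of_succ_le h) ⟨i, h⟩) *
          (1 - colv R i (Nat.le_of_succ_le h) j ⬝ᵥ (lead R i (Nat.le_of_succ_le h))⁻¹ *ᵥ
            colv R i (Nat.le_of_succ_le h) j) -
          (R ⟨i, h⟩ j - colv R i (Nat.le_of_succ_le h) ⟨i, h⟩ ⬝ᵥ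
              (lead R i (Nat.le_of_succ_le h))⁻¹ *ᵥ colv R i (Nat.le_of_succ_le h) j) *
            (R ⟨i, h⟩ j - colv R i (Nat.le_of_succ_le h) j ⬝ᵥ
              (lead R i (Nat.le_of_succ_le h))⁻¹ *ᵥ colv R i (Nat.le_of_succ_le h) ⟨i, h⟩)) := by
  have hsym : ∀ a b, R a b = R b a := fun a b => by
    conv_lhs => rw [← hR.1]
    simp [conjTranspose_apply]
  have h0 : i ≤ n := Nat.le_of_succ_le h
  set A := lead R i h0 with hA
  set ρ := colv R i h0 ⟨i, h⟩ with hρ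
  set σ := colv R i h0 j with hσ
  set r := R ⟨i, h⟩ j with hr
  have hb : brd R (i + 1) h j =
      (fromBlocks A
        (Matrix.of fun k (l : Fin 2) => if l = 0 then ρ k else σ k)
        (Matrix.of fun (l : Fin 2) k => if l = 0 then ρ k else σ k)
        (Matrix.of fun (a b : Fin 2) =>
          if a = 0 then (if b = 0 then (1 : ℝ) else r) else (if b = 0 then r else 1))).submatrix
        finSumFinEquiv.symm finSumFinEquiv.symm := by
    ext k l
    have hk3 : (k : ℕ) < i ∨ (k : ℕ) = i ∨ (k : ℕ) = i + 1 := by omega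
    have hl3 : (l : ℕ) < i ∨ (l : ℕ) = i ∨ (l : ℕ) = i + 1 := by omega
    rcases hk3 with hk | hk | hk <;> rcases hl3 with hl | hl | hl
    · rw [submatrix_apply, fsfe2_lt k hk, fsfe2_lt l hl]
      simp only [brd, of_apply, dif_pos (by omega : (k : ℕ) < i + 1),
        dif_pos (by omega : (l : ℕ) < i + 1), fromBlocks_apply₁₁]
      rfl
    · rw [submatrix_apply, fsfe2_lt k hk, fsfe2_eq l hl]
      simp only [brd, of_apply, dif_pos (by omega : (k : ℕ) < i + 1),
        dif_pos (by omega : (l : ℕ) < i + 1), fromBlocks_apply₁₂, of_apply, if_pos rfl, if_true]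
      have : (⟨(l : ℕ), lt_of_lt_of_le (by omega) h⟩ : Fin n) = ⟨i, h⟩ := Fin.ext hl
      rw [this]
      rfl
    · rw [submatrix_apply, fsfe2_lt k hk, fsfe2_eq1 l hl]
      simp only [brd, of_apply, dif_pos (by omega : (k : ℕ) < i + 1),
        dif_neg (by omega : ¬ (l : ℕ) < i + 1), fromBlocks_apply₁₂, of_apply]
      norm_num
      rfl
    · rw [submatrix_apply, fsfe2_eq k hk, fsfe2_lt l hl]
      simp only [brd, of_apply, dif_pos (by omega : (k : ℕ) < i + 1),
        dif_pos (by omega : (l : ℕ) < i + 1), fromBlocks_apply₂₁, of_apply, if_pos rfl, if_true]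
      have : (⟨(k : ℕ), lt_of_lt_of_le (by omega) h⟩ : Fin n) = ⟨i, h⟩ := Fin.ext hk
      rw [this]
      exact hsym _ _
    · rw [submatrix_apply, fsfe2_eq k hk, fsfe2_eq l hl]
      simp only [brd, of_apply, dif_pos (by omega : (k : ℕ) < i + 1),
        dif_pos (by omega : (l : ℕ) < i + 1), fromBlocks_apply₂₂, of_apply, if_pos rfl, if_true]
      have e1 : (⟨(k : ℕ), lt_of_lt_of_le (by omega) h⟩ : Fin n) = ⟨i, h⟩ := Fin.ext hk
      have e2 : (⟨(l : ℕ), lt_of_lt_of_le (by omega) h⟩ : Fin n) = ⟨i, h⟩ := Fin.ext hl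
      rw [e1, e2, hdiag]
    · rw [submatrix_apply, fsfe2_eq k hk, fsfe2_eq1 l hl]
      simp only [brd, of_apply, dif_pos (by omega : (k : ℕ) < i + 1),
        dif_neg (by omega : ¬ (l : ℕ) < i + 1), fromBlocks_apply₂₂, of_apply]
      norm_num
      have e1 : (⟨(k : ℕ), lt_of_lt_of_le (by omega) h⟩ : Fin n) = ⟨i, h⟩ := Fin.ext hk
      rw [e1, hr]
    · rw [submatrix_apply, fsfe2_eq1 k hk, fsfe2_lt l hl]
      simp only [brd, of_apply, dif_neg (by omega : ¬ (k : ℕ) < i + 1),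
        dif_pos (by omega : (l : ℕ) < i + 1), fromBlocks_apply₂₁, of_apply]
      norm_num
      rfl
    · rw [submatrix_apply, fsfe2_eq1 k hk, fsfe2_eq l hl]
      simp only [brd, of_apply, dif_neg (by omega : ¬ (k : ℕ) < i + 1),
        dif_pos (by omega : (l : ℕ) < i + 1), fromBlocks_apply₂₂, of_apply]
      norm_num
      have e2 : (⟨(l : ℕ), lt_of_lt_of_le (by omega) h⟩ : Fin n) = ⟨i, h⟩ := Fin.ext hl
      rw [e2, hr]
    · rw [submatrix_apply, fsfe2_eq1 k hk, fsfe2_eq1 l hl]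
      simp only [brd, of_apply, dif_neg (by omega : ¬ (k : ℕ) < i + 1),
        dif_neg (by omega : ¬ (l : ℕ) < i + 1), fromBlocks_apply₂₂, of_apply]
      norm_num
  rw [hb, det_submatrix_equiv_self, det_fromBlocks₁₁, invOf_eq_nonsing_inv]
  congr 1
  rw [det_fin_two]
  have key : ∀ (a b : Fin 2),
      ((Matrix.of fun (l : Fin 2) k => if l = 0 then ρ k else σ k) * A⁻¹ *
        (Matrix.of fun k (l : Fin 2) => if l = 0 then ρ k else σ k)) a b =
      (if a = 0 then ρ else σ) ⬝ᵥ A⁻¹ *ᵥ (if b = 0 then ρ else σ) := by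
    intro a b
    simp only [mul_apply, dotProduct, mulVec, of_apply, Finset.sum_mul, Finset.mul_sum]
    rw [Finset.sum_comm]
    apply Finset.sum_congr rfl
    intro k _
    apply Finset.sum_congr rfl
    intro l _
    fin_cases a <;> fin_cases b <;> simp <;> try ring
  simp only [Matrix.sub_apply, of_apply, key]
  norm_num
  try ring

end AuxLemmas

/-- The squared semi-partial correlation equals the difference of successive
determinant ratios: `(R_{ij} − ρ_i^{*j} R_{i−1}⁻¹ ρ_iᵀ)²/(1 − ρ_i R_{i−1}⁻¹ ρ_iᵀ)
 = det(R_i^{*j})/det(R_{i−1}) − det(R_{i+1}^{*j})/det(R_i)`.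
Here `m = i − 1 ≥ 0` is 0-indexed and the paper's `R_i^{*j}` is `brd R m`. -/
theorem stmt19 {n : ℕ} (R : Matrix (Fin n) (Fin n) ℝ) (hR : R.PosDef)
    (hdiag : ∀ k, R k k = 1) (m : ℕ) (hm : m + 1 ≤ n) (jf : Fin n)
    (hj : m + 1 ≤ (jf : ℕ)) :
    (R ⟨m, hm⟩ jf - colv R m (Nat.le_of_succ_le hm) jf ⬝ᵥ
          (lead R m (Nat.le_of_succ_le hm))⁻¹ *ᵥ
            colv R m (Nat.le_of_succ_le hm) ⟨m, hm⟩) ^ 2 /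
        (1 - colv R m (Nat.le_of_succ_le hm) ⟨m, hm⟩ ⬝ᵥ
            (lead R m (Nat.le_of_succ_le hm))⁻¹ *ᵥ
              colv R m (Nat.le_of_succ_le hm) ⟨m, hm⟩) =
      (brd R m (Nat.le_of_succ_le hm) jf).det / (lead R m (Nat.le_of_succ_le hm)).det -
        (brd R (m + 1) hm jf).det / (lead R (m + 1) hm).det := by
  have h0 : m ≤ n := Nat.le_of_succ_le hm
  have hA := lead_posDef hR m h0
  have hInv : Invertible (lead R m h0) :=
    (lead R m h0).invertibleOfIsUnitDet hA.det_pos.ne'.isUnit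
  have hB := lead_posDef hR (m + 1) hm
  have hH : ((lead R m h0)⁻¹).IsHermitian := hA.isHermitian.inv
  have hentry : ∀ k l, (lead R m h0)⁻¹ k l = (lead R m h0)⁻¹ l k := fun k l => by
    conv_lhs => rw [← hH]
    simp [conjTranspose_apply]
  have hsymAB : colv R m h0 ⟨m, hm⟩ ⬝ᵥ (lead R m h0)⁻¹ *ᵥ colv R m h0 jf
      = colv R m h0 jf ⬝ᵥ (lead R m h0)⁻¹ *ᵥ colv R m h0 ⟨m, hm⟩ := by
    simp only [dotProduct, mulVec, Finset.mul_sum]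
    rw [Finset.sum_comm]
    apply Finset.sum_congr rfl
    intro k _
    apply Finset.sum_congr rfl
    intro l _
    rw [hentry l k]
    ring
  have h1 : (lead R (m + 1) hm).det =
      (lead R m h0).det * (1 - colv R m h0 ⟨m, hm⟩ ⬝ᵥ (lead R m h0)⁻¹ *ᵥ colv R m h0 ⟨m, hm⟩) := by
    rw [lead_succ R hR hdiag m hm]
    exact det_brd R m h0 hInv ⟨m, hm⟩
  have h2 := det_brd R m h0 hInv jf
  have h3 := det_brd2 R hR hdiag m hm hInv jf
  have hdA : 0 < (lead R m h0).det := hA.det_pos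
  have hs : 0 < 1 - colv R m h0 ⟨m, hm⟩ ⬝ᵥ (lead R m h0)⁻¹ *ᵥ colv R m h0 ⟨m, hm⟩ := by
    have hd := hB.det_pos
    rw [h1] at hd
    by_contra hcon
    push_neg at hcon
    nlinarith
  rw [h1, h2, h3, hsymAB]
  have key : ∀ a s t q : ℝ, a ≠ 0 → s ≠ 0 →
      q ^ 2 / s = a * t / a - a * (s * t - q * q) / (a * s) := by
    intro a s t q ha hs
    field_simp
    ring
  exact key _ _ _ _ hdA.ne' hs.ne'
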